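/- Let A be a domain, p ⊆ q primes of A, and R the symbolic Rees algebra of p. Then Q := (q,t⁻¹) ⊕ pt ⊕ p^(2)t² ⊕ ⋯ is a prime ideal of R lying over (q,t⁻¹) in A[t⁻¹], with R/Q ≅ A/q, and Q is maximal among primes of R lying over (q,t⁻¹). -/

import Mathlib

noncomputable section

open LaurentPolynomial

/-- The `n`-th symbolic power `p^(n) := pⁿA_p ∩ A` of a prime ideal `p`. -/
def symbolicPower (A : Type*) [CommRing A] (p : Ideal A) [p.IsPrime] (n : ℕ) : Ideal A :=
  Ideal.comap (algebraMap A (Localization.AtPrime p))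
    (Ideal.map (algebraMap A (Localization.AtPrime p)) (p ^ n))

/-- The symbolic Rees algebra `R := A[t⁻¹, pt, p^(2)t², …] = ⊕_{n∈ℤ} p^(n)tⁿ`,
as a subalgebra of the Laurent polynomial ring `A[t, t⁻¹]`. -/
def symbolicReesAlgebra (A : Type*) [CommRing A] (p : Ideal A) [p.IsPrime] :
    Subalgebra A (LaurentPolynomial A) :=
  Algebra.adjoin A
    ({T (-1)} ∪ ⋃ n : ℕ, (fun x => C x * T (n : ℤ)) '' (symbolicPower A p n : Set A))

section Aux

variable {A : Type*} [CommRing A]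

lemma symbolicPower_le (p : Ideal A) [p.IsPrime] {n : ℕ} (hn : n ≠ 0) :
    symbolicPower A p n ≤ p := by
  intro x hx
  have h : x ∈ Ideal.comap (algebraMap A (Localization.AtPrime p))
      (Ideal.map (algebraMap A (Localization.AtPrime p)) p) :=
    Ideal.comap_mono (Ideal.map_mono (Ideal.pow_le_self hn)) hx
  rw [Localization.AtPrime.map_eq_maximalIdeal] at h
  exact Localization.AtPrime.under_maximalIdeal.le h

lemma mul_coeff_zero_mem {q : Ideal A} (f g : LaurentPolynomial A)
    (hf : ∀ n : ℤ, 0 ≤ n → (AddMonoidAlgebra.coeff f : ℤ →₀ A) n ∈ q) (hg : ∀ n : ℤ, 0 ≤ n → (AddMonoidAlgebra.coeff g : ℤ →₀ A) n ∈ q) :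
    (AddMonoidAlgebra.coeff (f * g : LaurentPolynomial A) : ℤ →₀ A) 0 ∈ q := by
  classical
  rw [AddMonoidAlgebra.mul_apply]
  apply Ideal.sum_mem
  intro a₁ _
  apply Ideal.sum_mem
  intro a₂ _
  dsimp only
  split_ifs with h
  · rcases le_or_gt 0 a₁ with h1 | h1
    · exact Ideal.mul_mem_right _ _ (hf a₁ h1)
    · exact Ideal.mul_mem_left _ _ (hg a₂ (by omega))
  · exact q.zero_mem

lemma mul_coeff_zero_sub_mem {q : Ideal A} (f g : LaurentPolynomial A)
    (hf : ∀ n : ℤ, 0 < n → (AddMonoidAlgebra.coeff f : ℤ →₀ A) n ∈ q) (hg : ∀ n : ℤ, 0 < n → (AddMonoidAlgebra.coeff g : ℤ →₀ A) n ∈ q) :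
    (AddMonoidAlgebra.coeff (f * g : LaurentPolynomial A) : ℤ →₀ A) 0
      - (AddMonoidAlgebra.coeff f : ℤ →₀ A) 0 * (AddMonoidAlgebra.coeff g : ℤ →₀ A) 0 ∈ q := by
  classical
  set a : A := (AddMonoidAlgebra.coeff f : ℤ →₀ A) 0 with ha
  set b : A := (AddMonoidAlgebra.coeff g : ℤ →₀ A) 0 with hb
  have l1 : ∀ (r : A) (h : LaurentPolynomial A) (x : ℤ),
      (AddMonoidAlgebra.coeff (C r * h : LaurentPolynomial A) : ℤ →₀ A) x = r * (AddMonoidAlgebra.coeff h : ℤ →₀ A) x :=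
    fun r h x => AddMonoidAlgebra.coeff_single_zero_mul h r x
  have l2 : ∀ (r : A) (h : LaurentPolynomial A) (x : ℤ),
      (AddMonoidAlgebra.coeff (h * C r : LaurentPolynomial A) : ℤ →₀ A) x = (AddMonoidAlgebra.coeff h : ℤ →₀ A) x * r :=
    fun r h x => AddMonoidAlgebra.coeff_mul_single_zero h r x
  have e : f * g = C a * C b
      + (C a * (g - C b) + ((f - C a) * C b + (f - C a) * (g - C b))) := by ring
  have hf' : ∀ n : ℤ, 0 ≤ n → (AddMonoidAlgebra.coeff (f - C a : LaurentPolynomial A) : ℤ →₀ A) n ∈ q := by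
    intro n hn
    rw [AddMonoidAlgebra.coeff_sub, Finsupp.sub_apply, C_apply]
    rcases eq_or_lt_of_le hn with h | h
    · simp [← h, ← ha]
    · rw [if_neg (by omega), sub_zero]
      exact hf n h
  have hg' : ∀ n : ℤ, 0 ≤ n → (AddMonoidAlgebra.coeff (g - C b : LaurentPolynomial A) : ℤ →₀ A) n ∈ q := by
    intro n hn
    rw [AddMonoidAlgebra.coeff_sub, Finsupp.sub_apply, C_apply]
    rcases eq_or_lt_of_le hn with h | h
    · simp [← h, ← hb]
    · rw [if_neg (by omega), sub_zero]
      exact hg n h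
  have key := mul_coeff_zero_mem _ _ hf' hg'
  have addap : ∀ (x y : LaurentPolynomial A) (n : ℤ),
      (AddMonoidAlgebra.coeff (x + y : LaurentPolynomial A) : ℤ →₀ A) n = (AddMonoidAlgebra.coeff x : ℤ →₀ A) n + (AddMonoidAlgebra.coeff y : ℤ →₀ A) n :=
    fun _ _ _ => rfl
  have subap : ∀ (x y : LaurentPolynomial A) (n : ℤ),
      (AddMonoidAlgebra.coeff (x - y : LaurentPolynomial A) : ℤ →₀ A) n = (AddMonoidAlgebra.coeff x : ℤ →₀ A) n - (AddMonoidAlgebra.coeff y : ℤ →₀ A) n :=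
    fun _ _ _ => rfl
  have c0 : ∀ r : A, (AddMonoidAlgebra.coeff (C r : LaurentPolynomial A) : ℤ →₀ A) 0 = r := fun r => by simp
  rw [e]
  simp only [addap, subap, l1, l2, c0, ← ha, ← hb, sub_self, mul_zero, zero_mul, add_zero,
    zero_add, add_sub_cancel_left]
  exact key

lemma coeff_mem_of_mem_symbolicReesAlgebra (p : Ideal A) [p.IsPrime]
    {f : LaurentPolynomial A} (hf : f ∈ symbolicReesAlgebra A p) :
    ∀ n : ℤ, 0 < n → (AddMonoidAlgebra.coeff f : ℤ →₀ A) n ∈ p := by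
  classical
  refine Algebra.adjoin_induction ?_ ?_ ?_ ?_ hf
  · rintro x (hx | hx)
    · intro n hn
      rw [Set.mem_singleton_iff.mp hx, T_apply, if_neg (by omega)]
      exact p.zero_mem
    · simp only [Set.mem_iUnion, Set.mem_image] at hx
      obtain ⟨m, a, haq, rfl⟩ := hx
      intro n hn
      rw [← single_eq_C_mul_T, AddMonoidAlgebra.coeff_single, Finsupp.single_apply]
      split_ifs with h
      · have hm : m ≠ 0 := by omega
        exact symbolicPower_le p hm haq
      · exact p.zero_mem
  · intro r n hn
    rw [LaurentPolynomial.algebraMap_apply, C_apply, if_neg (by omega)]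
    exact p.zero_mem
  · intro x y _ _ hx hy n hn
    rw [AddMonoidAlgebra.coeff_add, Finsupp.add_apply]
    exact p.add_mem (hx n hn) (hy n hn)
  · intro x y _ _ hx hy n hn
    rw [AddMonoidAlgebra.mul_apply]
    apply Ideal.sum_mem
    intro a₁ _
    apply Ideal.sum_mem
    intro a₂ _
    dsimp only
    split_ifs with h
    · rcases lt_or_ge 0 a₁ with h1 | h1
      · exact Ideal.mul_mem_right _ _ (hx a₁ h1)
      · exact Ideal.mul_mem_left _ _ (hy a₂ (by omega))
    · exact p.zero_mem

lemma aeval_T_neg_one_coeff_zero (P : Polynomial A) :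
    (AddMonoidAlgebra.coeff (Polynomial.aeval (T (-1) : LaurentPolynomial A) P : LaurentPolynomial A) : ℤ →₀ A) 0
      = P.coeff 0 := by
  induction P using Polynomial.induction_on' with
  | add f g hf hg =>
    rw [map_add, AddMonoidAlgebra.coeff_add, Finsupp.add_apply, hf, hg, Polynomial.coeff_add]
  | monomial n a =>
    rw [Polynomial.aeval_monomial, T_pow, LaurentPolynomial.algebraMap_apply,
      Algebra.algebraMap_self, RingHom.id_apply, ← single_eq_C_mul_T, AddMonoidAlgebra.coeff_single, Finsupp.single_apply,
      Polynomial.coeff_monomial]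
    by_cases h : n = 0 <;> simp [h] <;> omega

variable (p q : Ideal A) [p.IsPrime] [q.IsPrime]

lemma one_coeff_zero : (AddMonoidAlgebra.coeff ((1 : ↥(symbolicReesAlgebra A p)) : LaurentPolynomial A) : ℤ →₀ A) 0
    = 1 := by
  rw [show ((1 : ↥(symbolicReesAlgebra A p)) : LaurentPolynomial A) = 1 from rfl,
    AddMonoidAlgebra.one_def, AddMonoidAlgebra.coeff_single, Finsupp.single_eq_same]

/-- The ring hom `R → A/q`, `f ↦ f₀ mod q`. -/
def reesHom (hpq : p ≤ q) : ↥(symbolicReesAlgebra A p) →+* A ⧸ q where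
  toFun f := Ideal.Quotient.mk q ((AddMonoidAlgebra.coeff (f : LaurentPolynomial A) : ℤ →₀ A) 0)
  map_one' := by
    show Ideal.Quotient.mk q
      ((AddMonoidAlgebra.coeff ((1 : ↥(symbolicReesAlgebra A p)) : LaurentPolynomial A) : ℤ →₀ A) 0) = 1
    rw [one_coeff_zero, map_one]
  map_mul' f g := by
    show Ideal.Quotient.mk q ((AddMonoidAlgebra.coeff ((f * g : ↥(symbolicReesAlgebra A p)) : LaurentPolynomial A)
        : ℤ →₀ A) 0) = _
    have hc : ((f * g : ↥(symbolicReesAlgebra A p)) : LaurentPolynomial A)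
        = (f : LaurentPolynomial A) * (g : LaurentPolynomial A) := rfl
    rw [hc, ← map_mul, Ideal.Quotient.mk_eq_mk_iff_sub_mem]
    exact mul_coeff_zero_sub_mem (f : LaurentPolynomial A) (g : LaurentPolynomial A)
      (fun n hn => hpq (coeff_mem_of_mem_symbolicReesAlgebra p f.2 n hn))
      (fun n hn => hpq (coeff_mem_of_mem_symbolicReesAlgebra p g.2 n hn))
  map_zero' := by
    show Ideal.Quotient.mk q
      ((AddMonoidAlgebra.coeff ((0 : ↥(symbolicReesAlgebra A p)) : LaurentPolynomial A) : ℤ →₀ A) 0) = 0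
    rw [show (AddMonoidAlgebra.coeff ((0 : ↥(symbolicReesAlgebra A p)) : LaurentPolynomial A) : ℤ →₀ A) 0 = 0 from rfl,
      map_zero]
  map_add' f g := by
    show Ideal.Quotient.mk q ((AddMonoidAlgebra.coeff ((f + g : ↥(symbolicReesAlgebra A p)) : LaurentPolynomial A)
        : ℤ →₀ A) 0) = _
    have hc : ((f + g : ↥(symbolicReesAlgebra A p)) : LaurentPolynomial A)
        = (f : LaurentPolynomial A) + (g : LaurentPolynomial A) := rfl
    rw [hc, AddMonoidAlgebra.coeff_add, Finsupp.add_apply, map_add]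

lemma reesHom_apply (hpq : p ≤ q) (f : ↥(symbolicReesAlgebra A p)) :
    reesHom p q hpq f = Ideal.Quotient.mk q ((AddMonoidAlgebra.coeff (f : LaurentPolynomial A) : ℤ →₀ A) 0) := rfl

lemma coe_algebraMap_rees (a : A) :
    ((algebraMap A ↥(symbolicReesAlgebra A p) a : ↥(symbolicReesAlgebra A p))
      : LaurentPolynomial A) = C a := by
  rw [show ((algebraMap A ↥(symbolicReesAlgebra A p) a : ↥(symbolicReesAlgebra A p))
      : LaurentPolynomial A) = algebraMap A (LaurentPolynomial A) a from rfl,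
    LaurentPolynomial.algebraMap_apply, Algebra.algebraMap_self, RingHom.id_apply]

end Aux

/-- Let `A` be a domain, `p ⊆ q` primes of `A`, and `R` the symbolic Rees algebra
of `p`. Then `Q := (q,t⁻¹) ⊕ pt ⊕ p^(2)t² ⊕ ⋯` (the set of elements of `R` whose degree-zero
coefficient lies in `q`) is a prime ideal of `R` lying over `(q,t⁻¹)` in `A[t⁻¹]`, with
`R/Q ≅ A/q`, and `Q` is maximal among primes of `R` lying over `(q,t⁻¹)`. -/
theorem statement11 (A : Type*) [CommRing A] [IsDomain A] (p q : Ideal A)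
    [p.IsPrime] [q.IsPrime] (hpq : p ≤ q)
    (ti : ↥(symbolicReesAlgebra A p))
    (hti : (ti : LaurentPolynomial A) = T (-1))
    (Q : Ideal ↥(symbolicReesAlgebra A p))
    (hQ : ∀ f : ↥(symbolicReesAlgebra A p),
      f ∈ Q ↔ (AddMonoidAlgebra.coeff (f : LaurentPolynomial A) : ℤ →₀ A) 0 ∈ q) :
    Q.IsPrime ∧
    Ideal.comap (Polynomial.aeval ti : Polynomial A →ₐ[A] ↥(symbolicReesAlgebra A p)) Q =
      Ideal.map Polynomial.C q ⊔ Ideal.span {Polynomial.X} ∧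
    Nonempty ((↥(symbolicReesAlgebra A p) ⧸ Q) ≃+* A ⧸ q) ∧
    (∀ P : Ideal ↥(symbolicReesAlgebra A p), P.IsPrime →
      Ideal.comap (Polynomial.aeval ti : Polynomial A →ₐ[A] ↥(symbolicReesAlgebra A p)) P =
        Ideal.map Polynomial.C q ⊔ Ideal.span {Polynomial.X} →
      Q ≤ P → P = Q) := by
  classical
  set φ := reesHom p q hpq with hφ
  have hker : Q = RingHom.ker φ := by
    ext f
    rw [hQ, RingHom.mem_ker, hφ, reesHom_apply]
    exact (Ideal.Quotient.eq_zero_iff_mem).symm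
  have hprime : Q.IsPrime := hker ▸ RingHom.ker_isPrime φ
  have hval : ∀ P : Polynomial A,
      ((Polynomial.aeval ti P : ↥(symbolicReesAlgebra A p)) : LaurentPolynomial A)
      = Polynomial.aeval (T (-1) : LaurentPolynomial A) P := by
    intro P
    rw [← hti]
    exact (Polynomial.aeval_algHom_apply (symbolicReesAlgebra A p).val ti P).symm
  have hcomQ : Ideal.comap (Polynomial.aeval ti : Polynomial A →ₐ[A]
      ↥(symbolicReesAlgebra A p)) Q = Ideal.map Polynomial.C q ⊔ Ideal.span {Polynomial.X} := by
    have hmem : ∀ P : Polynomial A,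
        P ∈ Ideal.comap (Polynomial.aeval ti : Polynomial A →ₐ[A]
          ↥(symbolicReesAlgebra A p)) Q ↔ P.coeff 0 ∈ q := by
      intro P
      rw [Ideal.mem_comap]
      show Polynomial.aeval ti P ∈ Q ↔ _
      rw [hQ, hval, aeval_T_neg_one_coeff_zero]
    apply le_antisymm
    · intro P hP
      have h0 : P.coeff 0 ∈ q := (hmem P).mp hP
      have hdecomp : P = Polynomial.X * P.divX + Polynomial.C (P.coeff 0) :=
        (Polynomial.X_mul_divX_add P).symm
      rw [hdecomp]
      exact Ideal.add_mem _
        (Ideal.mem_sup_right (Ideal.mem_span_singleton.mpr ⟨P.divX, rfl⟩))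
        (Ideal.mem_sup_left (Ideal.mem_map_of_mem _ h0))
    · rw [sup_le_iff]
      constructor
      · rw [Ideal.map_le_iff_le_comap]
        intro a ha
        rw [Ideal.mem_comap, Ideal.mem_comap]
        show Polynomial.aeval ti (Polynomial.C a) ∈ Q
        rw [hQ, Polynomial.aeval_C, coe_algebraMap_rees]
        simpa using ha
      · rw [Ideal.span_le, Set.singleton_subset_iff]
        rw [SetLike.mem_coe, Ideal.mem_comap]
        show Polynomial.aeval ti Polynomial.X ∈ Q
        rw [hQ, Polynomial.aeval_X, hti]
        simpa using q.zero_mem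
  refine ⟨hprime, hcomQ, ?_, ?_⟩
  · have hsurj : Function.Surjective φ := by
      intro x
      obtain ⟨a, rfl⟩ := Ideal.Quotient.mk_surjective x
      refine ⟨algebraMap A ↥(symbolicReesAlgebra A p) a, ?_⟩
      rw [hφ, reesHom_apply, coe_algebraMap_rees]
      simp
    exact ⟨(Ideal.quotEquivOfEq hker).trans (RingHom.quotientKerEquivOfSurjective hsurj)⟩
  · intro P _ hcomP hQP
    refine le_antisymm (fun f hf => ?_) hQP
    have h1 : f - algebraMap A ↥(symbolicReesAlgebra A p)
        ((AddMonoidAlgebra.coeff (f : LaurentPolynomial A) : ℤ →₀ A) 0) ∈ Q := by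
      rw [hQ]
      have hc : ((f - algebraMap A ↥(symbolicReesAlgebra A p)
            ((AddMonoidAlgebra.coeff (f : LaurentPolynomial A) : ℤ →₀ A) 0) : ↥(symbolicReesAlgebra A p))
            : LaurentPolynomial A)
          = (f : LaurentPolynomial A)
            - C ((AddMonoidAlgebra.coeff (f : LaurentPolynomial A) : ℤ →₀ A) 0) := by
        rw [show ((f - algebraMap A ↥(symbolicReesAlgebra A p)
            ((AddMonoidAlgebra.coeff (f : LaurentPolynomial A) : ℤ →₀ A) 0) : ↥(symbolicReesAlgebra A p))
            : LaurentPolynomial A) = (f : LaurentPolynomial A)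
            - ((algebraMap A ↥(symbolicReesAlgebra A p)
              ((AddMonoidAlgebra.coeff (f : LaurentPolynomial A) : ℤ →₀ A) 0) : ↥(symbolicReesAlgebra A p))
              : LaurentPolynomial A) from rfl, coe_algebraMap_rees]
      rw [hc, AddMonoidAlgebra.coeff_sub, Finsupp.sub_apply, C_apply, if_pos rfl, sub_self]
      exact q.zero_mem
    have h2 : algebraMap A ↥(symbolicReesAlgebra A p)
        ((AddMonoidAlgebra.coeff (f : LaurentPolynomial A) : ℤ →₀ A) 0) ∈ P := by
      have := P.sub_mem hf (hQP h1)
      simpa using this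
    have h3 : Polynomial.C ((AddMonoidAlgebra.coeff (f : LaurentPolynomial A) : ℤ →₀ A) 0) ∈
        Ideal.comap (Polynomial.aeval ti : Polynomial A →ₐ[A]
          ↥(symbolicReesAlgebra A p)) P := by
      rw [Ideal.mem_comap]
      show Polynomial.aeval ti (Polynomial.C _) ∈ P
      rw [Polynomial.aeval_C]
      exact h2
    rw [hcomP, ← hcomQ, Ideal.mem_comap] at h3
    have h4 : (AddMonoidAlgebra.coeff (f : LaurentPolynomial A) : ℤ →₀ A) 0 ∈ q := by
      have h5 := (hQ _).mp h3
      rw [show ((Polynomial.aeval ti (Polynomial.C ((AddMonoidAlgebra.coeff (f : LaurentPolynomial A) : ℤ →₀ A) 0))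
          : ↥(symbolicReesAlgebra A p)) : LaurentPolynomial A)
        = C ((AddMonoidAlgebra.coeff (f : LaurentPolynomial A) : ℤ →₀ A) 0) by
          rw [Polynomial.aeval_C, coe_algebraMap_rees]] at h5
      simpa using h5
    exact (hQ f).mpr h4
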